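/- (Reversal of an NFA.) Let M be an NFA over alphabet α with state type Q, start set M.start, accepting set M.accept, and transition M.step. Define the reversed NFA M^R with start set M.accept, accepting set M.start, and transition M^R.step q a := { p | q ∈ M.step p a }. Then for every word w : List α, M^R accepts w if and only if M accepts w.reverse; that is, the language of M^R is exactly the set of reversals of words accepted by M. -/

import Mathlib

/-- The reversed NFA: start and accepting sets are swapped and every transition is
reversed, i.e. `M^R.step q a = { p | q ∈ M.step p a }`. -/
def NFA.reversed {α Q : Type*} (M : NFA α Q) : NFA α Q :=
  { step := fun q a => { p | q ∈ M.step p a }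
    start := M.accept
    accept := M.start }

theorem NFA.mem_evalFrom_iff {α Q : Type*} (M : NFA α Q) (w : List α) :
    ∀ (S : Set Q) (q : Q), q ∈ M.evalFrom S w ↔ ∃ p ∈ S, q ∈ M.evalFrom {p} w := by
  induction w with
  | nil => simp [NFA.evalFrom]
  | cons a w ih =>
    intro S q
    show q ∈ M.evalFrom (M.stepSet S a) w ↔ _
    rw [ih]
    constructor
    · rintro ⟨r, hr, hq⟩
      rw [NFA.mem_stepSet] at hr
      obtain ⟨p, hp, hr⟩ := hr
      refine ⟨p, hp, ?_⟩
      show q ∈ M.evalFrom (M.stepSet {p} a) w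
      rw [ih]
      exact ⟨r, by simpa [NFA.mem_stepSet] using hr, hq⟩
    · rintro ⟨p, hp, hq⟩
      rw [show M.evalFrom {p} (a :: w) = M.evalFrom (M.stepSet {p} a) w from rfl, ih] at hq
      obtain ⟨r, hr, hq⟩ := hq
      exact ⟨r, NFA.mem_stepSet .. |>.mpr ⟨p, hp, by simpa [NFA.mem_stepSet] using hr⟩, hq⟩

theorem NFA.reverse_evalFrom {α Q : Type*} (M : NFA α Q) (w : List α) :
    ∀ p q : Q, q ∈ M.evalFrom {p} w ↔ p ∈ M.reversed.evalFrom {q} w.reverse := by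
  induction w with
  | nil => exact fun p q => by simp [NFA.evalFrom, eq_comm]
  | cons a w ih =>
    intro p q
    rw [show M.evalFrom {p} (a :: w) = M.evalFrom (M.stepSet {p} a) w from rfl,
      M.mem_evalFrom_iff, List.reverse_cons, NFA.evalFrom_append, NFA.evalFrom_singleton,
      NFA.mem_stepSet]
    constructor
    · rintro ⟨r, hr, hq⟩
      exact ⟨r, (ih r q).mp hq, by simpa [NFA.mem_stepSet, NFA.reversed] using hr⟩
    · rintro ⟨r, hr, hp⟩
      exact ⟨r, by simpa [NFA.mem_stepSet, NFA.reversed] using hp, (ih r q).mpr hr⟩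

/-- The reversed NFA accepts exactly the reversals of the words accepted by the original
NFA. -/
theorem NFA.reverse_accepts {α Q : Type*} (M : NFA α Q) (w : List α) :
    w ∈ M.reversed.accepts ↔ w.reverse ∈ M.accepts := by
  rw [NFA.mem_accepts, NFA.mem_accepts]
  constructor
  · rintro ⟨q, hq, hev⟩
    rw [M.reversed.mem_evalFrom_iff] at hev
    obtain ⟨p, hp, hev⟩ := hev
    refine ⟨p, hp, ?_⟩
    rw [M.mem_evalFrom_iff]
    exact ⟨q, hq, (M.reverse_evalFrom w.reverse q p).mpr (by simpa using hev)⟩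
  · rintro ⟨q, hq, hev⟩
    rw [M.mem_evalFrom_iff] at hev
    obtain ⟨p, hp, hev⟩ := hev
    refine ⟨p, hp, ?_⟩
    rw [M.reversed.mem_evalFrom_iff]
    exact ⟨q, hq, by simpa using (M.reverse_evalFrom w.reverse p q).mp hev⟩
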